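/- Let E be a module over L⁰ = L⁰(𝔉,ℝ) and let U ⊆ E be L⁰-convex, L⁰-absorbent and L⁰-balanced with the countable concatenation property. Suppose p_U : E → L⁰₊ satisfies that p_U(x) is the greatest lower bound in (L⁰, ≤) of {ξ ∈ L⁰₊ : x ∈ ξU} for every x ∈ E. Then {x ∈ E : p_U(x) < 1 P-a.e. on Ω} ⊆ U ⊆ {x ∈ E : p_U(x) ≤ 1}. -/

import Mathlib

noncomputable section

open MeasureTheory Set Pointwise Filter Topology

namespace PaperL0

variable {Ω : Type*} [MeasurableSpace Ω]

instance commRingL0 (μ : Measure Ω) : CommRing (Ω →ₘ[μ] ℝ) :=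
  { (inferInstance : AddCommGroup (Ω →ₘ[μ] ℝ)),
    (inferInstance : CommMonoid (Ω →ₘ[μ] ℝ)) with
    left_distrib := fun f g h => MeasureTheory.AEEqFun.toGerm_injective <| by
      simp [MeasureTheory.AEEqFun.mul_toGerm, MeasureTheory.AEEqFun.add_toGerm, mul_add]
    right_distrib := fun f g h => MeasureTheory.AEEqFun.toGerm_injective <| by
      simp [MeasureTheory.AEEqFun.mul_toGerm, MeasureTheory.AEEqFun.add_toGerm, add_mul]
    zero_mul := fun f => MeasureTheory.AEEqFun.toGerm_injective <| by
      simp [MeasureTheory.AEEqFun.mul_toGerm, MeasureTheory.AEEqFun.zero_toGerm]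
    mul_zero := fun f => MeasureTheory.AEEqFun.toGerm_injective <| by
      simp [MeasureTheory.AEEqFun.mul_toGerm, MeasureTheory.AEEqFun.zero_toGerm] }

variable (μ : Measure Ω)

/-- `L⁰₊`, the set of nonnegative elements of `L⁰`. -/
def Lpos : Set (Ω →ₘ[μ] ℝ) := {ξ | 0 ≤ ξ}

/-- `L⁰₊₊`, the set of elements of `L⁰` which are `> 0` a.e. on `Ω`. -/
def Lspos : Set (Ω →ₘ[μ] ℝ) := {ξ | ∀ᵐ ω ∂μ, 0 < ξ ω}

/-- The absolute value `|ξ|` of an element of `L⁰`. -/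
def aabs {μ : Measure Ω} (ξ : Ω →ₘ[μ] ℝ) : Ω →ₘ[μ] ℝ := ξ ⊔ -ξ

/-- `B_ε = {ξ ∈ L⁰ : |ξ| ≤ ε}`. -/
def ball (ε : Ω →ₘ[μ] ℝ) : Set (Ω →ₘ[μ] ℝ) := {ξ | aabs ξ ≤ ε}

open Classical in
/-- `Ĩ_A`, the equivalence class of the indicator function of a (measurable) set `A`. -/
def ind (A : Set Ω) : Ω →ₘ[μ] ℝ :=
  if h : MeasurableSet A then
    AEEqFun.mk (A.indicator fun _ => (1 : ℝ))
      ((measurable_const.indicator h).aestronglyMeasurable)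
  else 0

/-- A countable measurable partition of `Ω`. -/
def IsMeasPartition (A : ℕ → Set Ω) : Prop :=
  (∀ n, MeasurableSet (A n)) ∧ Pairwise (Function.onFun Disjoint A) ∧ (⋃ n, A n) = Set.univ

variable {E : Type*} [AddCommGroup E] [Module (Ω →ₘ[μ] ℝ) E]

/-- `L⁰`-convexity of a subset of an `L⁰`-module. -/
def IsL0Convex (U : Set E) : Prop :=
  ∀ x ∈ U, ∀ y ∈ U, ∀ ξ : Ω →ₘ[μ] ℝ, 0 ≤ ξ → ξ ≤ 1 → ξ • x + (1 - ξ) • y ∈ U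

/-- `L⁰`-absorbency of a subset of an `L⁰`-module. -/
def IsL0Absorbent (U : Set E) : Prop := ∀ x : E, ∃ ξ ∈ Lspos μ, x ∈ ξ • U

/-- `L⁰`-balancedness of a subset of an `L⁰`-module. -/
def IsL0Balanced (U : Set E) : Prop :=
  ∀ x ∈ U, ∀ ξ : Ω →ₘ[μ] ℝ, aabs ξ ≤ 1 → ξ • x ∈ U

/-- An `L⁰`-seminorm on an `L⁰`-module. -/
structure IsL0Seminorm (p : E → Ω →ₘ[μ] ℝ) : Prop where
  nonneg : ∀ x, 0 ≤ p x
  homog : ∀ (ξ : Ω →ₘ[μ] ℝ) (x : E), p (ξ • x) = aabs ξ * p x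
  triangle : ∀ x y, p (x + y) ≤ p x + p y

/-- The countable concatenation property for a subset of an `L⁰`-module. -/
def HasCCP (G : Set E) : Prop :=
  ∀ x : ℕ → E, (∀ n, x n ∈ G) → ∀ A : ℕ → Set Ω, IsMeasPartition A →
    (∃ y : E, ∀ n, ind μ (A n) • y = ind μ (A n) • x n) ∧
      ∀ y : E, (∀ n, ind μ (A n) • y = ind μ (A n) • x n) → y ∈ G

/-- The relative countable concatenation property for a subset of an `L⁰`-module. -/
def HasRelCCP (G : Set E) : Prop :=
  ∀ x : ℕ → E, (∀ n, x n ∈ G) → ∀ A : ℕ → Set Ω, IsMeasPartition A →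
    ∀ y : E, (∀ n, ind μ (A n) • y = ind μ (A n) • x n) → y ∈ G

/-- A `P`-atom of a measure. -/
def IsPAtom (A : Set Ω) : Prop :=
  MeasurableSet A ∧ 0 < μ A ∧ ∀ B, MeasurableSet B → B ⊆ A → μ B = 0 ∨ μ B = μ A

end PaperL0

open PaperL0

section Helpers

open MeasureTheory
open scoped ENNReal

variable {Ω : Type*} [MeasurableSpace Ω]

private lemma ind_coeFn (μ : Measure Ω) {A : Set Ω} (hA : MeasurableSet A) :
    ⇑(ind μ A) =ᵐ[μ] A.indicator (fun _ => (1 : ℝ)) := by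
  rw [ind, dif_pos hA]
  exact AEEqFun.coeFn_mk _ _

private lemma L0_zero_le_one (μ : Measure Ω) : (0 : Ω →ₘ[μ] ℝ) ≤ 1 := by
  rw [← AEEqFun.coeFn_le]
  filter_upwards [AEEqFun.coeFn_zero (μ := μ) (β := ℝ), AEEqFun.coeFn_one (μ := μ) (β := ℝ)]
    with ω h0 h1
  rw [h0, h1]
  exact zero_le_one

private lemma aabs_inf_one_le_one {μ : Measure Ω} {ξ : Ω →ₘ[μ] ℝ} (hξ : 0 ≤ ξ) :
    aabs (ξ ⊓ 1) ≤ 1 := by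
  have hξ' : ⇑(0 : Ω →ₘ[μ] ℝ) ≤ᵐ[μ] ⇑ξ := AEEqFun.coeFn_le.mpr hξ
  show (ξ ⊓ 1) ⊔ -(ξ ⊓ 1) ≤ 1
  rw [← AEEqFun.coeFn_le]
  filter_upwards [AEEqFun.coeFn_sup (ξ ⊓ 1) (-(ξ ⊓ 1)), AEEqFun.coeFn_neg (ξ ⊓ 1),
    AEEqFun.coeFn_inf ξ 1, AEEqFun.coeFn_one (μ := μ) (β := ℝ),
    AEEqFun.coeFn_zero (μ := μ) (β := ℝ), hξ'] with ω h1 h2 h3 h4 h5 h6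
  simp only [Pi.one_apply, Pi.zero_apply, Pi.neg_apply] at h1 h2 h3 h4 h5 h6 ⊢
  rw [h5] at h6
  rw [h1, h2, h3, h4]
  refine sup_le inf_le_right ?_
  have h7 : (0 : ℝ) ≤ (ξ : Ω → ℝ) ω ⊓ 1 := le_inf h6 zero_le_one
  linarith

/-- Measure-theoretic essential supremum: from any family of measurable sets one can select a
countable subfamily whose union essentially contains every member of the family. -/
private lemma exists_ess_cover (P : Measure Ω) [IsProbabilityMeasure P] {ι : Type*} [Nonempty ι]
    (C : ι → Set Ω) (hC : ∀ i, MeasurableSet (C i)) :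
    ∃ τ : ℕ → ι, ∀ i, P (C i \ ⋃ n, C (τ n)) = 0 := by
  classical
  set s : ℝ≥0∞ := ⨆ σ : ℕ → ι, P (⋃ n, C (σ n)) with hs
  have hs_top : s ≠ ⊤ :=
    ne_top_of_le_ne_top ENNReal.one_ne_top (iSup_le fun σ => prob_le_one)
  have hσ : ∀ k : ℕ, ∃ σ : ℕ → ι, s ≤ P (⋃ n, C (σ n)) + ((k : ℝ≥0∞) + 1)⁻¹ := by
    intro k
    rcases eq_or_ne s 0 with h0 | h0
    · exact ⟨fun _ => Classical.arbitrary ι, by simp [h0]⟩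
    · have hlt : s - ((k : ℝ≥0∞) + 1)⁻¹ < s := by
        refine ENNReal.sub_lt_self hs_top h0 (by simp)
      obtain ⟨σ, hσ⟩ := lt_iSup_iff.mp hlt
      exact ⟨σ, tsub_le_iff_right.mp hσ.le⟩
  choose σ hσ using hσ
  set τ : ℕ → ι := fun m => σ m.unpair.1 m.unpair.2 with hτdef
  set D : Set Ω := ⋃ n, C (τ n) with hD
  have hDle : P D ≤ s := le_iSup (fun σ : ℕ → ι => P (⋃ n, C (σ n))) τ
  have hsub : ∀ k n, C (σ k n) ⊆ D := by
    intro k n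
    have : C (σ k n) = C (τ (Nat.pair k n)) := by
      simp only [hτdef, Nat.unpair_pair]
    rw [this]
    exact Set.subset_iUnion (fun m => C (τ m)) (Nat.pair k n)
  have h1 : ∀ k : ℕ, s ≤ P D + ((k : ℝ≥0∞) + 1)⁻¹ := fun k =>
    (hσ k).trans (add_le_add (measure_mono (Set.iUnion_subset (hsub k))) le_rfl)
  have h2 : Filter.Tendsto (fun k : ℕ => P D + ((k : ℝ≥0∞) + 1)⁻¹)
      Filter.atTop (𝓝 (P D + 0)) := by
    refine Filter.Tendsto.add tendsto_const_nhds ?_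
    have := ENNReal.tendsto_inv_nat_nhds_zero.comp (Filter.tendsto_add_atTop_nat 1)
    convert this using 2 with k
    simp [Function.comp, Nat.cast_add]
  rw [add_zero] at h2
  have hsle : s ≤ P D := ge_of_tendsto' h2 h1
  have hDs : P D = s := le_antisymm hDle hsle
  refine ⟨τ, fun i => ?_⟩
  set σ' : ℕ → ι := fun n => Nat.casesOn n i τ with hσ'
  have hU : (⋃ n, C (σ' n)) = C i ∪ D := by
    ext ω
    simp only [Set.mem_iUnion, Set.mem_union, hD]
    constructor
    · rintro ⟨n, hn⟩
      cases n with
      | zero => exact Or.inl hn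
      | succ m => exact Or.inr ⟨m, hn⟩
    · rintro (h | h)
      · exact ⟨0, h⟩
      · obtain ⟨m, hm⟩ := h
        exact ⟨m + 1, hm⟩
  have hcup : P (C i ∪ D) ≤ s := by
    rw [← hU]; exact le_iSup (fun σ : ℕ → ι => P (⋃ n, C (σ n))) σ'
  have hDm : MeasurableSet D := MeasurableSet.iUnion fun m => hC _
  have h3 : P (C i \ D) + P D = P (C i ∪ D) := by
    rw [← measure_union disjoint_sdiff_self_left hDm, Set.diff_union_self]
  have h4 : P (C i \ D) + P D ≤ 0 + P D := by
    rw [h3, zero_add]; exact hcup.trans hDs.ge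
  exact le_zero_iff.mp ((ENNReal.add_le_add_iff_right (measure_ne_top P D)).mp h4)

end Helpers

/-- Proposition 3.8: if U is L⁰-convex, L⁰-absorbent and L⁰-balanced and has the countable
concatenation property, then {x : p_U x < 1 a.e.} ⊆ U ⊆ {x : p_U x ≤ 1}. -/
theorem statement16
    {Ω : Type*} [MeasurableSpace Ω] (P : Measure Ω) [IsProbabilityMeasure P]
    {E : Type*} [AddCommGroup E] [Module (Ω →ₘ[P] ℝ) E]
    (U : Set E)
    (hconv : IsL0Convex P U) (habs : IsL0Absorbent P U) (hbal : IsL0Balanced P U)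
    (hccp : HasCCP P U)
    (pU : E → Ω →ₘ[P] ℝ)
    (hpU : ∀ x : E, IsGLB {ξ : Ω →ₘ[P] ℝ | ξ ∈ Lpos P ∧ x ∈ ξ • U} (pU x)) :
    {x : E | ∀ᵐ ω ∂P, (pU x) ω < 1} ⊆ U ∧ U ⊆ {x : E | pU x ≤ 1} := by
  classical
  constructor
  · -- hard inclusion: {pU x < 1 a.e.} ⊆ U
    intro x hx
    have hx : ∀ᵐ ω ∂P, (pU x) ω < 1 := hx
    set Sset : Set (Ω →ₘ[P] ℝ) := {ξ : Ω →ₘ[P] ℝ | ξ ∈ Lpos P ∧ x ∈ ξ • U} with hSset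
    -- Sset is nonempty by absorbency
    obtain ⟨ξ₀, hξ₀pos, hξ₀mem⟩ := habs x
    have hξ₀nonneg : (0 : Ω →ₘ[P] ℝ) ≤ ξ₀ := by
      rw [← AEEqFun.coeFn_le]
      filter_upwards [hξ₀pos, AEEqFun.coeFn_zero (μ := P) (β := ℝ)] with ω h1 h2
      rw [h2]; exact h1.le
    have hne : Nonempty ↥Sset := ⟨⟨ξ₀, hξ₀nonneg, hξ₀mem⟩⟩
    set C : ↥Sset → Set Ω := fun ξ => {ω | (ξ : Ω →ₘ[P] ℝ) ω ≤ 1} with hCdef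
    have hC : ∀ ξ : ↥Sset, MeasurableSet (C ξ) := fun ξ =>
      measurableSet_le (ξ : Ω →ₘ[P] ℝ).measurable measurable_const
    obtain ⟨τ, hτ⟩ := exists_ess_cover P C hC
    set D : Set Ω := ⋃ n, C (τ n) with hDdef
    have hDm : MeasurableSet D := MeasurableSet.iUnion fun m => hC _
    -- a.e. D covers Ω
    have hlb : ind P Dᶜ ∈ lowerBounds Sset := by
      intro ξ hξ
      rw [← AEEqFun.coeFn_le]
      have hae1 : ∀ᵐ ω ∂P, ω ∉ C ⟨ξ, hξ⟩ \ D :=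
        (measure_eq_zero_iff_ae_notMem).mp (hτ ⟨ξ, hξ⟩)
      filter_upwards [hae1, AEEqFun.coeFn_le.mpr hξ.1, AEEqFun.coeFn_zero (μ := P) (β := ℝ),
        ind_coeFn P hDm.compl] with ω h1 h2 h3 h4
      rw [h4]
      rw [h3] at h2
      by_cases hω : ω ∈ Dᶜ
      · rw [Set.indicator_of_mem hω]
        by_contra hcon
        push_neg at hcon
        exact h1 ⟨hcon.le, hω⟩
      · rw [Set.indicator_of_notMem hω]
        exact h2
    have hindle : ind P Dᶜ ≤ pU x := (hpU x).2 hlb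
    have hDae : ∀ᵐ ω ∂P, ω ∈ D := by
      have : ∀ᵐ ω ∂P, ¬ ω ∈ Dᶜ := by
        filter_upwards [AEEqFun.coeFn_le.mpr hindle, hx, ind_coeFn P hDm.compl]
          with ω h1 h2 h3
        intro hω
        rw [h3, Set.indicator_of_mem hω] at h1
        exact absurd (h1.trans_lt h2) (lt_irrefl 1)
      filter_upwards [this] with ω h
      simpa using h
    -- partition
    set A0 : ℕ → Set Ω := disjointed (fun n => C (τ n)) with hA0def
    have hA0m : ∀ n, MeasurableSet (A0 n) := MeasurableSet.disjointed fun m => hC _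
    have hA0sub : ∀ n, A0 n ⊆ C (τ n) := fun n => disjointed_le (fun n => C (τ n)) n
    have hA0D : ∀ n, A0 n ⊆ D := fun n =>
      (hA0sub n).trans (Set.subset_iUnion (fun m => C (τ m)) n)
    set A : ℕ → Set Ω := fun n => Nat.casesOn n (A0 0 ∪ Dᶜ) (fun k => A0 (k + 1)) with hAdef
    have hAm : ∀ n, MeasurableSet (A n) := by
      intro n
      cases n with
      | zero => exact (hA0m 0).union hDm.compl
      | succ k => exact hA0m (k + 1)
    have hd0 : Pairwise (Function.onFun Disjoint A0) := disjoint_disjointed _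
    have hdc : ∀ k, Disjoint (Dᶜ) (A0 k) := fun k =>
      disjoint_compl_left.mono_right (hA0D k)
    have hApair : Pairwise (Function.onFun Disjoint A) := by
      intro m n hmn
      unfold Function.onFun
      match m, n with
      | 0, 0 => exact absurd rfl hmn
      | 0, (n' + 1) =>
        exact Set.disjoint_union_left.mpr ⟨hd0 (Nat.succ_ne_zero n').symm, hdc _⟩
      | (m' + 1), 0 =>
        exact (Set.disjoint_union_left.mpr ⟨hd0 (Nat.succ_ne_zero m').symm, hdc _⟩).symm
      | (m' + 1), (n' + 1) =>
        exact hd0 (by omega)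
    have hAunion : (⋃ n, A n) = Set.univ := by
      apply Set.eq_univ_of_forall
      intro ω
      rw [Set.mem_iUnion]
      by_cases hω : ω ∈ D
      · have : ω ∈ ⋃ n, A0 n := by
          rw [hA0def, iUnion_disjointed]
          exact hω
        obtain ⟨n, hn⟩ := Set.mem_iUnion.mp this
        cases n with
        | zero => exact ⟨0, Or.inl hn⟩
        | succ k => exact ⟨k + 1, hn⟩
      · exact ⟨0, Or.inr hω⟩
    -- data for each n
    have hτnonneg : ∀ n, (0 : Ω →ₘ[P] ℝ) ≤ (τ n : Ω →ₘ[P] ℝ) := fun n => (τ n).2.1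
    have hmem : ∀ n : ℕ, ∃ u ∈ U, ((τ n : Ω →ₘ[P] ℝ)) • u = x := fun n =>
      Set.mem_smul_set.mp (τ n).2.2
    choose u hu hux using hmem
    have hAe : ∀ n, ∀ᵐ ω ∂P, ω ∈ A n → ((τ n : Ω →ₘ[P] ℝ)) ω ≤ 1 := by
      intro n
      cases n with
      | zero =>
        filter_upwards [hDae] with ω hω hmem
        rcases hmem with h | h
        · exact hA0sub 0 h
        · exact absurd hω h
      | succ k =>
        exact Filter.Eventually.of_forall fun ω h => hA0sub (k + 1) h
    have hmul : ∀ n, ind P (A n) * ((τ n : Ω →ₘ[P] ℝ) ⊓ 1)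
        = ind P (A n) * (τ n : Ω →ₘ[P] ℝ) := by
      intro n
      apply AEEqFun.ext
      filter_upwards [AEEqFun.coeFn_mul (ind P (A n)) ((τ n : Ω →ₘ[P] ℝ) ⊓ 1),
        AEEqFun.coeFn_mul (ind P (A n)) (τ n : Ω →ₘ[P] ℝ),
        AEEqFun.coeFn_inf (τ n : Ω →ₘ[P] ℝ) 1, AEEqFun.coeFn_one (μ := P) (β := ℝ),
        ind_coeFn P (hAm n), hAe n] with ω h1 h2 h3 h4 h5 h6
      rw [h1, h2]
      simp only [Pi.mul_apply]
      rw [h3, h4, h5]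
      by_cases hω : ω ∈ A n
      · rw [Set.indicator_of_mem hω]
        simp only [one_mul]
        exact min_eq_left (h6 hω)
      · rw [Set.indicator_of_notMem hω]
        simp
    have hz : ∀ n, ((τ n : Ω →ₘ[P] ℝ) ⊓ 1) • u n ∈ U := fun n =>
      hbal (u n) (hu n) _ (aabs_inf_one_le_one (hτnonneg n))
    have hkey : ∀ n, ind P (A n) • x = ind P (A n) • (((τ n : Ω →ₘ[P] ℝ) ⊓ 1) • u n) := by
      intro n
      calc ind P (A n) • x = ind P (A n) • ((τ n : Ω →ₘ[P] ℝ) • u n) := by rw [hux n]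
        _ = (ind P (A n) * (τ n : Ω →ₘ[P] ℝ)) • u n := smul_smul _ _ _
        _ = (ind P (A n) * ((τ n : Ω →ₘ[P] ℝ) ⊓ 1)) • u n := by rw [hmul n]
        _ = ind P (A n) • (((τ n : Ω →ₘ[P] ℝ) ⊓ 1) • u n) := (smul_smul _ _ _).symm
    exact (hccp (fun n => ((τ n : Ω →ₘ[P] ℝ) ⊓ 1) • u n) hz A ⟨hAm, hApair, hAunion⟩).2 x hkey
  · -- easy inclusion: U ⊆ {pU x ≤ 1}
    intro x hx
    exact (hpU x).1 ⟨L0_zero_le_one P, ⟨x, hx, one_smul _ x⟩⟩
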